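/- No OWA mechanism with n ≥ 3 simultaneously satisfies NOM and IFS: if an OWA is not obviously manipulable (i.e., w_j = 1 for some j, or w_1 = w_n = 0), then it cannot satisfy both w_1 ≥ 1/n and w_n ≥ 1/n. -/
import Mathlib


theorem owa_NOM_incompatible_with_IFS {n : ℕ} (hn : 3 ≤ n)
    (w : Fin n → ℝ) (hw : ∀ j, w j ∈ Set.Icc (0:ℝ) 1) (hsum : ∑ j, w j = 1)
    (hnom : (∃ j, w j = 1) ∨ (w ⟨0, by omega⟩ = 0 ∧ w ⟨n - 1, by omega⟩ = 0)) :
    ¬ (1 / (n:ℝ) ≤ w ⟨0, by omega⟩ ∧ 1 / (n:ℝ) ≤ w ⟨n - 1, by omega⟩) := by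
  have hnpos : (0:ℝ) < 1 / n := by
    apply div_pos one_pos
    exact_mod_cast by omega
  rintro ⟨h0, h1⟩
  have hzero : ∀ k : Fin n, w k = 1 → ∀ m : Fin n, m ≠ k → w m = 0 := by
    intro k hk m hm
    have hrest : ∑ j ∈ Finset.univ.erase k, w j = 0 := by
      have := Finset.add_sum_erase Finset.univ w (Finset.mem_univ k)
      rw [hsum, hk] at this
      linarith
    have := Finset.sum_eq_zero_iff_of_nonneg (fun j _ => (hw j).1) |>.mp hrest m
      (Finset.mem_erase.mpr ⟨hm, Finset.mem_univ m⟩)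
    exact this
  have hne : (⟨0, by omega⟩ : Fin n) ≠ ⟨n - 1, by omega⟩ := by
    simp only [ne_eq, Fin.mk.injEq]; omega
  rcases hnom with ⟨j, hj⟩ | ⟨hA, hB⟩
  · by_cases hj0 : j = ⟨0, by omega⟩
    · have := hzero j hj ⟨n - 1, by omega⟩ (by rw [hj0]; exact hne.symm)
      linarith
    · have := hzero j hj ⟨0, by omega⟩ (Ne.symm hj0)
      linarith
  · linarith
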